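/- Let f(x) = (1/N) Σ_{i=1}^N q_i(β_iᵀ x) on ℝ^d, where each q_i : ℝ → ℝ is twice continuously differentiable with |q_i''(t)| ≤ L₀ for all t, and each β_i ∈ ℝ^d satisfies ‖β_i‖₂² ≤ R. Then ED_α ≤ (L₀ R)^α for every α ≥ 1, and ED_α ≤ (L₀ R)^α · d^{1−α} for every 0 < α < 1. -/

import Mathlib

open scoped BigOperators
open Matrix
lemma eigsum {d N : ℕ} (A : Matrix (Fin d) (Fin d) ℝ) (hA : A.IsHermitian)
    (c : Fin N → ℝ) (v : Fin N → Fin d → ℝ)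
    (hAe : ∀ i j, A i j = ∑ k, c k * (v k i * v k j)) :
    ∑ j, |hA.eigenvalues j| ≤ ∑ k, |c k| * ∑ i, (v k i)^2 := by
  classical
  set b := hA.eigenvectorBasis with hb
  have key : ∀ p : Fin d, hA.eigenvalues p
      = ∑ k, c k * (∑ i, v k i * b p i)^2 := by
    intro p
    have hm := hA.mulVec_eigenvectorBasis p
    have hnorm : ∑ i, b p i * b p i = 1 := by
      have h1 : ‖b p‖ = 1 := b.orthonormal.1 p
      have h2 : (inner ℝ (b p) (b p) : ℝ) = ‖b p‖ ^ 2 := real_inner_self_eq_norm_sq _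
      rw [h1] at h2
      simp only [PiLp.inner_apply, RCLike.inner_apply, conj_trivial, one_pow] at h2
      exact h2
    have e1 : ∑ i, b p i * (A *ᵥ ((WithLp.equiv 2 ((i : Fin d) → ℝ)) (b p))) i = hA.eigenvalues p := by
      rw [WithLp.equiv_apply, hm]
      simp only [Pi.smul_apply, smul_eq_mul, WithLp.equiv_apply]
      calc ∑ i, b p i * (hA.eigenvalues p * b p i)
          = hA.eigenvalues p * ∑ i, b p i * b p i := by
            rw [Finset.mul_sum]; apply Finset.sum_congr rfl; intros; ring
        _ = hA.eigenvalues p := by rw [hnorm, mul_one]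
    rw [← e1]
    simp only [Matrix.mulVec, dotProduct, hAe, Finset.sum_mul, Finset.mul_sum,
      WithLp.equiv_apply]
    calc ∑ x : Fin d, ∑ y : Fin d, ∑ k : Fin N, b p x * (c k * (v k x * v k y) * b p y)
        = ∑ x : Fin d, ∑ k : Fin N, ∑ y : Fin d, b p x * (c k * (v k x * v k y) * b p y) := by
          apply Finset.sum_congr rfl; intros; rw [Finset.sum_comm]
      _ = ∑ k : Fin N, ∑ x : Fin d, ∑ y : Fin d, b p x * (c k * (v k x * v k y) * b p y) := by
          rw [Finset.sum_comm]
      _ = ∑ k, c k * (∑ i, v k i * b p i)^2 := by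
          apply Finset.sum_congr rfl; intro k _
          rw [sq, Finset.sum_mul_sum, Finset.mul_sum]
          apply Finset.sum_congr rfl; intro x _
          rw [Finset.mul_sum]
          apply Finset.sum_congr rfl; intro y _
          ring
  have parseval : ∀ k, ∑ p, (∑ i, v k i * b p i)^2 = ∑ i, (v k i)^2 := by
    intro k
    have h := b.sum_inner_mul_inner ((WithLp.equiv 2 _).symm (v k)) ((WithLp.equiv 2 _).symm (v k))
    simp only [PiLp.inner_apply, RCLike.inner_apply, conj_trivial,
      WithLp.equiv_symm_apply, PiLp.toLp_apply, WithLp.ofLp_toLp] at h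
    calc ∑ p, (∑ i, v k i * b p i)^2
        = ∑ p, (∑ i, v k i * b p i) * (∑ i, b p i * v k i) := by
          apply Finset.sum_congr rfl; intro p _
          rw [sq]; congr 1; apply Finset.sum_congr rfl; intros; rw [mul_comm]
      _ = ∑ i, (v k i)^2 := by
          rw [show ∑ p, (∑ i, v k i * b p i) * (∑ i, b p i * v k i) = ∑ p, (∑ i, b p i * v k i) * (∑ i, v k i * b p i) from Finset.sum_congr rfl fun p _ => mul_comm _ _, h]; apply Finset.sum_congr rfl; intros; rw [sq]
  calc ∑ p, |hA.eigenvalues p|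
      ≤ ∑ p, ∑ k, |c k| * (∑ i, v k i * b p i)^2 := by
        apply Finset.sum_le_sum; intro p _
        rw [key p]
        refine (Finset.abs_sum_le_sum_abs _ _).trans ?_
        apply Finset.sum_le_sum; intro k _
        rw [abs_mul, abs_of_nonneg (sq_nonneg (∑ i, v k i * b p i))]
    _ = ∑ k, |c k| * ∑ p, (∑ i, v k i * b p i)^2 := by
        rw [Finset.sum_comm]; apply Finset.sum_congr rfl; intros; rw [Finset.mul_sum]
    _ ≤ ∑ k, |c k| * ∑ i, (v k i)^2 := by
        apply Finset.sum_le_sum; intro k _; rw [parseval k]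

lemma hessA {d N : ℕ} (q : Fin N → ℝ → ℝ) (βv : Fin N → Fin d → ℝ)
    (hq : ∀ i, ContDiff ℝ 2 (q i)) (f : (Fin d → ℝ) → ℝ)
    (hf : ∀ x, f x = (1 / (N : ℝ)) * ∑ i, q i (∑ j, βv i j * x j))
    (x : Fin d → ℝ) (i j : Fin d) :
    iteratedFDeriv ℝ 2 f x ![Pi.single i 1, Pi.single j 1]
      = ∑ k, ((1 / (N : ℝ)) * deriv (deriv (q k)) (∑ j', βv k j' * x j'))
          * (βv k i * βv k j) := by
  classical
  set ℓ : Fin N → (Fin d → ℝ) →L[ℝ] ℝ :=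
    fun k => ∑ j, βv k j • ContinuousLinearMap.proj j with hℓdef
  have hℓ : ∀ k (y : Fin d → ℝ), ℓ k y = ∑ j, βv k j * y j := by
    intro k y
    simp [hℓdef, ContinuousLinearMap.sum_apply]
  have hd1 : ∀ k, Differentiable ℝ (q k) := fun k =>
    (hq k).differentiable (by norm_num)
  have hd2 : ∀ k, Differentiable ℝ (deriv (q k)) := by
    intro k
    have h2 : ContDiff ℝ ((1:ℕ) + 1) (q k) := by exact_mod_cast hq k
    have := (contDiff_succ_iff_deriv.mp h2).2.2
    exact this.differentiable (by norm_num)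
  set F1 : (Fin d → ℝ) → ((Fin d → ℝ) →L[ℝ] ℝ) :=
    fun y => ∑ k, ((1 / (N : ℝ)) * deriv (q k) (ℓ k y)) • ℓ k with hF1def
  have hF1 : ∀ y, HasFDerivAt f (F1 y) y := by
    intro y
    have hfe : f = fun y => ∑ k, (1 / (N : ℝ)) * q k (ℓ k y) := by
      funext z
      rw [hf z, Finset.mul_sum]
      exact Finset.sum_congr rfl fun k _ => by rw [hℓ]
    rw [hfe]
    apply HasFDerivAt.fun_sum
    intro k _
    have inner : HasFDerivAt (fun y => q k (ℓ k y))
        ((deriv (q k) (ℓ k y)) • ℓ k) y :=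
      ((hd1 k (ℓ k y)).hasDerivAt).comp_hasFDerivAt y ((ℓ k).hasFDerivAt)
    have := inner.const_mul (1 / (N : ℝ))
    simpa [smul_smul] using this
  set F2 : ((Fin d → ℝ) →L[ℝ] ((Fin d → ℝ) →L[ℝ] ℝ)) :=
    ∑ k, (((1 / (N : ℝ)) * deriv (deriv (q k)) (ℓ k x)) • ℓ k).smulRight (ℓ k) with hF2def
  have hF2 : HasFDerivAt F1 F2 x := by
    rw [hF1def, hF2def]
    apply HasFDerivAt.fun_sum
    intro k _
    have inner : HasFDerivAt (fun y => deriv (q k) (ℓ k y))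
        ((deriv (deriv (q k)) (ℓ k x)) • ℓ k) x :=
      ((hd2 k (ℓ k x)).hasDerivAt).comp_hasFDerivAt x ((ℓ k).hasFDerivAt)
    have h' : HasFDerivAt (fun y => (1 / (N : ℝ)) * deriv (q k) (ℓ k y))
        (((1 / (N : ℝ)) * deriv (deriv (q k)) (ℓ k x)) • ℓ k) x := by
      have := inner.const_mul (1 / (N : ℝ))
      simpa [smul_smul] using this
    exact h'.smul_const (ℓ k)
  have hff : fderiv ℝ f = F1 := funext fun y => (hF1 y).fderiv
  have hsingle : ∀ k (i : Fin d), ℓ k (Pi.single i 1) = βv k i := by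
    intro k i
    rw [hℓ]
    simp [Pi.single_apply, mul_ite]
  rw [iteratedFDeriv_two_apply, hff, hF2.fderiv, hF2def]
  simp only [Matrix.cons_val_zero, Matrix.cons_val_one, Matrix.head_cons,
    ContinuousLinearMap.sum_apply, ContinuousLinearMap.smulRight_apply,
    ContinuousLinearMap.smul_apply, smul_eq_mul, hsingle]
  apply Finset.sum_congr rfl
  intro k _
  rw [hℓ]
  ring

lemma rpow_sum_le_one_le {d : ℕ} (a : Fin d → ℝ) (ha : ∀ i, 0 ≤ a i) (B : ℝ)
    (hB : 0 ≤ B) (hsum : ∑ i, a i ≤ B) {α : ℝ} (hα : 1 ≤ α) :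
    ∑ i, a i ^ α ≤ B ^ α := by
  have hα0 : (0:ℝ) < α := lt_of_lt_of_le one_pos hα
  have hle : ∀ i, a i ≤ B := fun i =>
    le_trans (Finset.single_le_sum (fun j _ => ha j) (Finset.mem_univ i)) hsum
  rcases eq_or_lt_of_le hB with hB0 | hBpos
  · have hz : ∀ i, a i = 0 := fun i => le_antisymm (hB0 ▸ hle i) (ha i)
    rw [← hB0, Real.zero_rpow (ne_of_gt hα0)]
    simp [hz, Real.zero_rpow (ne_of_gt hα0)]
  · calc ∑ i, a i ^ α ≤ ∑ i, a i * B ^ (α - 1) := by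
          apply Finset.sum_le_sum
          intro i _
          rcases eq_or_lt_of_le (ha i) with h0 | hpos
          · rw [← h0, Real.zero_rpow (ne_of_gt hα0), zero_mul]
          · calc a i ^ α = a i ^ (1 + (α - 1)) := by congr 1; ring
              _ = a i ^ (1:ℝ) * a i ^ (α - 1) := Real.rpow_add hpos 1 (α-1)
              _ = a i * a i ^ (α - 1) := by rw [Real.rpow_one]
              _ ≤ a i * B ^ (α - 1) := mul_le_mul_of_nonneg_left
                  (Real.rpow_le_rpow (ha i) (hle i) (by linarith)) (ha i)
      _ = (∑ i, a i) * B ^ (α - 1) := by rw [Finset.sum_mul]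
      _ ≤ B * B ^ (α - 1) := mul_le_mul_of_nonneg_right hsum (Real.rpow_nonneg hB _)
      _ = B ^ α := by
          calc B * B ^ (α - 1) = B ^ (1:ℝ) * B ^ (α - 1) := by rw [Real.rpow_one]
            _ = B ^ (1 + (α - 1)) := (Real.rpow_add hBpos 1 (α-1)).symm
            _ = B ^ α := by congr 1; ring

lemma rpow_sum_le_lt_one {d : ℕ} (a : Fin d → ℝ) (ha : ∀ i, 0 ≤ a i) (B : ℝ)
    (hB : 0 ≤ B) (hsum : ∑ i, a i ≤ B) {α : ℝ} (hα0 : 0 < α) (hα1 : α < 1) :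
    ∑ i, a i ^ α ≤ B ^ α * (d : ℝ) ^ (1 - α) := by
  rcases Nat.eq_zero_or_pos d with hd | hd
  · subst hd
    simp [Real.zero_rpow (by linarith : (1:ℝ) - α ≠ 0),
      Real.rpow_nonneg hB]
  have hdpos : (0:ℝ) < d := by exact_mod_cast hd
  have hp : (1:ℝ) ≤ α⁻¹ := (one_le_inv₀ hα0).2 hα1.le
  have hmean := Real.arith_mean_le_rpow_mean Finset.univ (fun _ : Fin d => (d:ℝ)⁻¹)
    (fun i => a i ^ α) (fun i _ => by positivity)
    (by simp [Finset.card_univ]; field_simp)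
    (fun i _ => Real.rpow_nonneg (ha i) α) hp
  have hsimp : ∀ i : Fin d, (a i ^ α) ^ α⁻¹ = a i := by
    intro i
    rw [← Real.rpow_mul (ha i), mul_inv_cancel₀ (ne_of_gt hα0), Real.rpow_one]
  rw [show (1:ℝ)/α⁻¹ = α by field_simp] at hmean
  simp only [hsimp] at hmean
  rw [← Finset.mul_sum, ← Finset.mul_sum] at hmean
  have h2 : ((d:ℝ)⁻¹ * ∑ i, a i) ^ α ≤ ((d:ℝ)⁻¹ * B) ^ α := by
    apply Real.rpow_le_rpow
    · exact mul_nonneg (by positivity) (Finset.sum_nonneg fun i _ => ha i)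
    · exact mul_le_mul_of_nonneg_left hsum (by positivity)
    · exact hα0.le
  have h3 : ∑ i, a i ^ α ≤ (d:ℝ) * (((d:ℝ)⁻¹ * B) ^ α) := by
    calc ∑ i, a i ^ α = (d:ℝ) * ((d:ℝ)⁻¹ * ∑ i, a i ^ α) := by field_simp
      _ ≤ (d:ℝ) * (((d:ℝ)⁻¹ * B) ^ α) :=
          mul_le_mul_of_nonneg_left (hmean.trans h2) hdpos.le
  refine h3.trans (le_of_eq ?_)
  rw [Real.mul_rpow (by positivity) hB, Real.inv_rpow hdpos.le,
    Real.rpow_sub hdpos, Real.rpow_one]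
  field_simp

/-- Effective-dimension bound for ridge-separable objectives
`f x = (1/N) ∑ᵢ qᵢ(βᵢᵀ x)` with `|qᵢ''| ≤ L₀` and `‖βᵢ‖₂² ≤ R`.
The effective dimension `ED_α` is the supremum over `x` of the sum of the
`α`-th powers of the singular values (absolute eigenvalues) of the Hessian. -/
theorem stmt_1 (d N : ℕ) (hN : 0 < N)
    (q : Fin N → ℝ → ℝ) (βv : Fin N → Fin d → ℝ)
    (hq : ∀ i, ContDiff ℝ 2 (q i))
    (L₀ R : ℝ)
    (hq'' : ∀ i t, |deriv (deriv (q i)) t| ≤ L₀)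
    (hβv : ∀ i, ∑ j, (βv i j) ^ 2 ≤ R)
    (f : (Fin d → ℝ) → ℝ)
    (hf : ∀ x, f x = (1 / (N : ℝ)) * ∑ i, q i (∑ j, βv i j * x j))
    (Hess : (Fin d → ℝ) → Matrix (Fin d) (Fin d) ℝ)
    (hHess : ∀ x i j, Hess x i j =
      iteratedFDeriv ℝ 2 f x ![Pi.single i 1, Pi.single j 1])
    (hsymm : ∀ x, (Hess x).IsHermitian)
    (α : ℝ) :
    (1 ≤ α → (⨆ x, ∑ i, |(hsymm x).eigenvalues i| ^ α) ≤ (L₀ * R) ^ α) ∧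
    (0 < α → α < 1 →
      (⨆ x, ∑ i, |(hsymm x).eigenvalues i| ^ α) ≤ (L₀ * R) ^ α * (d : ℝ) ^ (1 - α)) := by
  classical
  have hL0 : 0 ≤ L₀ := le_trans (abs_nonneg _) (hq'' ⟨0, hN⟩ 0)
  have hR : 0 ≤ R := le_trans (Finset.sum_nonneg fun j _ => sq_nonneg _) (hβv ⟨0, hN⟩)
  have key : ∀ x : Fin d → ℝ, ∑ j, |(hsymm x).eigenvalues j| ≤ L₀ * R := by
    intro x
    have hAe : ∀ i j, Hess x i j = ∑ k,
        ((1 / (N : ℝ)) * deriv (deriv (q k)) (∑ j', βv k j' * x j'))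
          * (βv k i * βv k j) := by
      intro i j; rw [hHess x i j, hessA q βv hq f hf x i j]
    refine (eigsum (Hess x) (hsymm x) _ βv hAe).trans ?_
    have step : ∀ k : Fin N,
        |(1 / (N : ℝ)) * deriv (deriv (q k)) (∑ j', βv k j' * x j')|
          * ∑ i, (βv k i)^2 ≤ (1 / (N : ℝ)) * L₀ * R := by
      intro k
      have hNpos : (0:ℝ) < N := by exact_mod_cast hN
      apply mul_le_mul ?_ (hβv k) (Finset.sum_nonneg fun i _ => sq_nonneg _)
        (by positivity)
      rw [abs_mul, abs_of_nonneg (by positivity : (0:ℝ) ≤ 1 / (N : ℝ))]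
      exact mul_le_mul_of_nonneg_left (hq'' k _) (by positivity)
    refine (Finset.sum_le_sum fun k _ => step k).trans (le_of_eq ?_)
    rw [Finset.sum_const, Finset.card_univ, Fintype.card_fin, nsmul_eq_mul]
    have hNne : (N:ℝ) ≠ 0 := by positivity
    field_simp
  constructor
  · intro hα
    exact ciSup_le fun x =>
      rpow_sum_le_one_le _ (fun i => abs_nonneg _) _ (mul_nonneg hL0 hR) (key x) hα
  · intro h0 h1
    exact ciSup_le fun x =>
      rpow_sum_le_lt_one _ (fun i => abs_nonneg _) _ (mul_nonneg hL0 hR) (key x) h0 h1
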